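/- arXiv:math/0002183 — 2 statements merged into one kernel-verified Lean document; each statement's English description precedes it below -/
import Mathlib

section
/- (Hedlund's Lemma) Let X be a second countable topological space and W a group of homeomorphisms of X. Let μ be a W-invariant W-ergodic Borel measure on X. Then for μ-almost every x ∈ X, the closure of the orbit Wx equals supp(μ). -/
open MeasureTheory Topology Set Filter Function
open scoped Manifold Pointwise

noncomputable section

/-- The `ℝ`-subalgebra of polynomial functions on the space of linear endomorphisms of `V`,
generated by the matrix-coefficient functions `A ↦ φ (A v)`. -/
def polyFunctions (V : Type*) [AddCommGroup V] [Module ℝ V] :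
    Subalgebra ℝ ((V →ₗ[ℝ] V) → ℝ) :=
  Algebra.adjoin ℝ {f | ∃ (v : V) (φ : V →ₗ[ℝ] ℝ), f = fun A => φ (A v)}

/-- Zariski closure of a set of linear endomorphisms of `V`. -/
def zcl {V : Type*} [AddCommGroup V] [Module ℝ V] (X : Set (V →ₗ[ℝ] V)) :
    Set (V →ₗ[ℝ] V) :=
  {A | ∀ f ∈ polyFunctions V, (∀ B ∈ X, f B = 0) → f A = 0}

/-- A linear endomorphism is unipotent if `A - id` is nilpotent. -/
def IsUnipotentLin {V : Type*} [AddCommGroup V] [Module ℝ V] (A : V →ₗ[ℝ] V) : Prop :=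
  IsNilpotent (A - LinearMap.id)

/-- Support of a Borel measure: the complement of the union of all open null sets. -/
def msupp {X : Type*} [TopologicalSpace X] [MeasurableSpace X] (μ : Measure X) : Set X :=
  (⋃₀ {U : Set X | IsOpen U ∧ μ U = 0})ᶜ

/-- A measure is invariant under every element of a set `S` of group elements. -/
def InvariantUnder {G : Type*} [Group G] (S : Set G) {X : Type*} [MulAction G X]
    [MeasurableSpace X] (μ : Measure X) : Prop :=
  ∀ g ∈ S, Measure.map (fun x => g • x) μ = μ

/-- A measure is ergodic under a set `S` of group elements: every `S`-invariant Borel set is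
null or conull. -/
def ErgodicUnder {G : Type*} [Group G] (S : Set G) {X : Type*} [MulAction G X]
    [MeasurableSpace X] (μ : Measure X) : Prop :=
  ∀ s : Set X, MeasurableSet s → (∀ g ∈ S, (fun x => g • x) ⁻¹' s = s) →
    μ s = 0 ∨ μ sᶜ = 0

/-- The orbit of a point `x` under a set `S` of group elements. -/
def orbitSet {G : Type*} [Group G] (S : Set G) {X : Type*} [MulAction G X] (x : X) : Set X :=
  (fun g => g • x) '' S

/-- The adjoint representation of a Lie group modelled on `E`: the differential at the
identity of the conjugation map `x ↦ g * x * g⁻¹`. -/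
def adRep {E : Type*} [NormedAddCommGroup E] [NormedSpace ℝ E]
    {G : Type*} [TopologicalSpace G] [ChartedSpace E G] [Group G] (g : G) :
    E →ₗ[ℝ] E :=
  (mfderiv 𝓘(ℝ, E) 𝓘(ℝ, E) (fun x => g * x * g⁻¹) (1 : G)).toLinearMap

/-- A one-parameter `Ad`-unipotent subgroup: a continuous homomorphism `φ : ℝ → G` all of
whose values are `Ad`-unipotent. -/
def IsOneParamUnipotent (E : Type*) [NormedAddCommGroup E] [NormedSpace ℝ E]
    {G : Type*} [TopologicalSpace G] [ChartedSpace E G] [Group G] (φ : ℝ → G) : Prop :=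
  Continuous φ ∧ (∀ s t : ℝ, φ (s + t) = φ s * φ t) ∧
    ∀ t : ℝ, IsUnipotentLin (adRep (E := E) (φ t))

/-- The Lie algebra of a subgroup `F` of a Lie group modelled on `E`: the span of the velocity
vectors at the identity of one-parameter subgroups contained in `F`. -/
def lieOf (E : Type*) [NormedAddCommGroup E] [NormedSpace ℝ E]
    {G : Type*} [TopologicalSpace G] [ChartedSpace E G] [Group G] (F : Subgroup G) :
    Submodule ℝ E :=
  Submodule.span ℝ {v : E | ∃ φ : ℝ → G, Continuous φ ∧ (∀ s t : ℝ, φ (s + t) = φ s * φ t) ∧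
    (∀ t : ℝ, φ t ∈ F) ∧ mfderiv 𝓘(ℝ, ℝ) 𝓘(ℝ, E) φ (0 : ℝ) (1 : ℝ) = v}

/-- `N¹_G(F)`: the set of elements of the normalizer of `F` whose adjoint action restricts to
the Lie algebra of `F` with determinant one. -/
def N1 (E : Type*) [NormedAddCommGroup E] [NormedSpace ℝ E]
    {G : Type*} [TopologicalSpace G] [ChartedSpace E G] [Group G] (F : Subgroup G) : Set G :=
  {g | g ∈ Subgroup.normalizer (F : Set G) ∧ ∃ A : lieOf E F →ₗ[ℝ] lieOf E F,
    (∀ v : lieOf E F, (A v : E) = adRep (E := E) g v) ∧ LinearMap.det A = 1}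

/-- A lattice: a discrete subgroup of finite covolume (there is a nonzero finite invariant
Borel measure on the quotient). -/
def IsLattice (G : Type*) [TopologicalSpace G] [Group G] (Γ : Subgroup G) : Prop :=
  DiscreteTopology Γ ∧
  letI : MeasurableSpace (G ⧸ Γ) := borel (G ⧸ Γ)
  ∃ μ : Measure (G ⧸ Γ), μ ≠ 0 ∧ IsFiniteMeasure μ ∧ InvariantUnder (univ : Set G) μ

/-- The homogeneous space `G ⧸ Γ` carries a nonzero finite `G`-invariant measure. -/
def HasFiniteInvariantMeasure {G : Type*} [Group G] (Γ : Subgroup G)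
    [MeasurableSpace (G ⧸ Γ)] : Prop :=
  ∃ ν : Measure (G ⧸ Γ), ν ≠ 0 ∧ IsFiniteMeasure ν ∧ InvariantUnder (univ : Set G) ν

/-- The identity component of a subgroup `H`, as a subgroup of `G`. -/
def compOf {G : Type*} [TopologicalSpace G] [Group G] [IsTopologicalGroup G] (H : Subgroup G) :
    Subgroup G :=
  (Subgroup.connectedComponentOfOne ↥H).map H.subtype

/-- The collection `ℋ_u` of subgroups `H` of `G` such that `H = ⟨w⟩H⁰`, `H ∩ Γ` is a lattice
in `H`, and the closure of `⟨w⟩x₀` equals `Hx₀`, where `w = g⁻¹ug ∈ H` for some `g ∈ G⁰`. -/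
def HH {G : Type*} [TopologicalSpace G] [Group G] [IsTopologicalGroup G]
    (Γ : Subgroup G) (u : G) : Set (Subgroup G) :=
  {H | ∃ g ∈ Subgroup.connectedComponentOfOne G, g⁻¹ * u * g ∈ H ∧
    (H : Set G) = (Subgroup.zpowers (g⁻¹ * u * g) : Set G) * ((compOf H : Subgroup G) : Set G) ∧
    IsLattice ↥H (Γ.subgroupOf H) ∧
    closure (orbitSet ((Subgroup.zpowers (g⁻¹ * u * g) : Subgroup G) : Set G)
        (QuotientGroup.mk (1 : G) : G ⧸ Γ)) =
      orbitSet (H : Set G) (QuotientGroup.mk (1 : G) : G ⧸ Γ)}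

/-- `N(H,u) = {g ∈ G⁰ : ug ∈ gH}`. -/
def NSet {G : Type*} [TopologicalSpace G] [Group G] [IsTopologicalGroup G]
    (H : Subgroup G) (u : G) : Set G :=
  {g | g ∈ Subgroup.connectedComponentOfOne G ∧ g⁻¹ * u * g ∈ H}

/-- `S(H,u) = ⋃_{F < H} N(F,u)`, the union over `F ∈ ℋ_u` with `F ⊆ H` and `π(F) ≠ π(H)`. -/
def SingularSet {G : Type*} [TopologicalSpace G] [Group G] [IsTopologicalGroup G]
    (Γ : Subgroup G) (H : Subgroup G) (u : G) : Set G :=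
  ⋃ F ∈ {F : Subgroup G | F ∈ HH Γ u ∧ F ≤ H ∧
    (QuotientGroup.mk '' (F : Set G) : Set (G ⧸ Γ)) ≠ QuotientGroup.mk '' (H : Set G)},
    NSet F u

/-- `N*(H,u) = N(H,u) \ S(H,u)`. -/
def NStar {G : Type*} [TopologicalSpace G] [Group G] [IsTopologicalGroup G]
    (Γ : Subgroup G) (H : Subgroup G) (u : G) : Set G :=
  NSet H u \ SingularSet Γ H u

/-- `λ_H`: an `H`-invariant Borel probability measure concentrated on the orbit `H·x₀`. -/
def IsCanonicalMeasure {G : Type*} [TopologicalSpace G] [Group G]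
    (Γ : Subgroup G) [MeasurableSpace (G ⧸ Γ)] (H : Subgroup G)
    (lamH : Measure (G ⧸ Γ)) : Prop :=
  IsProbabilityMeasure lamH ∧ InvariantUnder (H : Set G) lamH ∧
    lamH (orbitSet (H : Set G) (QuotientGroup.mk (1 : G) : G ⧸ Γ))ᶜ = 0


/-- The group of self-homeomorphisms of `X`, under composition. -/
instance homeomorphGroup {X : Type*} [TopologicalSpace X] : Group (X ≃ₜ X) where
  mul f g := g.trans f
  one := Homeomorph.refl X
  inv f := f.symm
  mul_assoc f g h := Homeomorph.ext fun _ => rfl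
  one_mul f := Homeomorph.ext fun _ => rfl
  mul_one f := Homeomorph.ext fun _ => rfl
  inv_mul_cancel f := Homeomorph.ext fun x => f.symm_apply_apply x

theorem hedlund_lemma {X : Type*} [TopologicalSpace X] [SecondCountableTopology X]
    [MeasurableSpace X] [BorelSpace X]
    (W : Subgroup (X ≃ₜ X)) (μ : Measure X)
    (hinv : ∀ h ∈ W, Measure.map (h : X → X) μ = μ)
    (herg : ∀ s : Set X, MeasurableSet s → (∀ h ∈ W, (h : X → X) ⁻¹' s = s) →
      μ s = 0 ∨ μ sᶜ = 0) :
    ∀ᵐ x ∂μ, closure ((fun h : X ≃ₜ X => h x) '' (W : Set (X ≃ₜ X))) = msupp μ := by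
  classical
  set S : Set (Set X) := {U : Set X | IsOpen U ∧ μ U = 0} with hS
  have hNopen : IsOpen (⋃₀ S) := isOpen_sUnion fun U hU => hU.1
  have hNnull : μ (⋃₀ S) = 0 := by
    obtain ⟨T, hTc, hTS, hTeq⟩ :=
      TopologicalSpace.isOpen_sUnion_countable S (fun U hU => hU.1)
    rw [← hTeq]
    exact (measure_sUnion_null_iff hTc).2 fun U hU => (hTS hU).2
  have hmsupp : msupp μ = (⋃₀ S)ᶜ := rfl
  -- Part A : a.e. x, the whole orbit lies in msupp μ
  have hpre : ∀ h ∈ W, ((h : X ≃ₜ X) : X → X) ⁻¹' (⋃₀ S) ⊆ ⋃₀ S := by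
    intro h hh
    apply subset_sUnion_of_mem
    refine ⟨hNopen.preimage h.continuous, ?_⟩
    calc μ (((h : X ≃ₜ X) : X → X) ⁻¹' (⋃₀ S))
        = Measure.map ((h : X ≃ₜ X) : X → X) μ (⋃₀ S) :=
          (Measure.map_apply h.continuous.measurable hNopen.measurableSet).symm
      _ = μ (⋃₀ S) := by rw [hinv h hh]
      _ = 0 := hNnull
  have hsubAE : ∀ᵐ x ∂μ, ∀ h ∈ W, ((h : X ≃ₜ X) : X → X) x ∈ msupp μ := by
    have hxN : ∀ᵐ x ∂μ, x ∉ ⋃₀ S := by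
      rw [ae_iff]
      simpa only [not_not, Set.setOf_mem_eq] using hNnull
    filter_upwards [hxN] with x hx h hh
    rw [hmsupp]
    intro hmem
    exact hx (hpre h hh hmem)
  -- Part B : a.e. x, the orbit closure contains msupp μ
  obtain ⟨B, hBc, -, hBb⟩ := TopologicalSpace.exists_countable_basis X
  -- the saturated set of a basic open set
  set A : Set X → Set X := fun U => ⋃ h ∈ (W : Set (X ≃ₜ X)), ((h : X ≃ₜ X) : X → X) ⁻¹' U
    with hA
  have hAopen : ∀ U ∈ B, IsOpen (A U) := fun U hU =>
    isOpen_biUnion fun h _ => (hBb.isOpen hU).preimage h.continuous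
  have hAinv : ∀ U : Set X, ∀ g ∈ W, ((g : X ≃ₜ X) : X → X) ⁻¹' (A U) = A U := by
    intro U g hg
    rw [hA]
    simp only [preimage_iUnion]
    ext x
    simp only [mem_iUnion, mem_preimage, SetLike.mem_coe]
    constructor
    · rintro ⟨h, hh, hx⟩
      exact ⟨h * g, W.mul_mem hh hg, hx⟩
    · rintro ⟨k, hk, hx⟩
      refine ⟨k * g⁻¹, W.mul_mem hk (W.inv_mem hg), ?_⟩
      have : ((k * g⁻¹ : X ≃ₜ X) : X → X) ((g : X ≃ₜ X) x) = (k : X ≃ₜ X) x := by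
        show (k : X ≃ₜ X) ((g⁻¹ : X ≃ₜ X) ((g : X ≃ₜ X) x)) = (k : X ≃ₜ X) x
        congr 1
        exact (g : X ≃ₜ X).symm_apply_apply x
      rw [this]
      exact hx
  have hAconull : ∀ U ∈ B, μ U ≠ 0 → μ (A U)ᶜ = 0 := by
    intro U hU hμU
    rcases herg (A U) (hAopen U hU).measurableSet (hAinv U) with h0 | h0
    · exfalso
      apply hμU
      have hUA : U ⊆ A U := by
        intro x hx
        refine mem_iUnion₂.2 ⟨1, W.one_mem, ?_⟩
        simpa using hx
      exact measure_mono_null hUA h0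
    · exact h0
  have hBAE : ∀ᵐ x ∂μ, ∀ U ∈ B, μ U ≠ 0 → x ∈ A U := by
    rw [ae_ball_iff hBc]
    intro U hU
    by_cases hμU : μ U = 0
    · exact Eventually.of_forall fun x h => absurd hμU h
    · have : ∀ᵐ x ∂μ, x ∈ A U := by
        rw [ae_iff]
        exact hAconull U hU hμU
      filter_upwards [this] with x hx _
      exact hx
  -- Combine
  filter_upwards [hsubAE, hBAE] with x hx1 hx2
  apply Set.Subset.antisymm
  · apply closure_minimal
    · rintro y ⟨h, hh, rfl⟩
      exact hx1 h hh
    · rw [hmsupp]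
      exact hNopen.isClosed_compl
  · intro y hy
    rw [mem_closure_iff]
    intro V hVopen hyV
    obtain ⟨U, hU, hyU, hUV⟩ := hBb.exists_subset_of_mem_open hyV hVopen
    have hμU : μ U ≠ 0 := by
      intro h0
      rw [hmsupp] at hy
      exact hy (subset_sUnion_of_mem (⟨hBb.isOpen hU, h0⟩ : U ∈ S) hyU)
    obtain ⟨h, hh, hhx⟩ := mem_iUnion₂.1 (hx2 U hU hμU)
    exact ⟨(h : X ≃ₜ X) x, hUV hhx, ⟨h, hh, rfl⟩⟩
end
end

section
/- Let G be a locally compact group, Λ a closed subgroup of G, and x₀ = eΛ ∈ G/Λ. Let Z be a closed subgroup of {g ∈ G : gΛg⁻¹ ⊆ Λ} such that the orbit Zx₀ is compact, and let ρ : G/Λ → G/ZΛ be the natural quotient map. Suppose H is a closed subgroup of G such that the orbit Hx₀ is open in its closure cl(Hx₀). Then ρ(cl(Hx₀) \ Hx₀) = cl(Hρ(x₀)) \ Hρ(x₀). In particular, if Hρ(x₀) is closed in G/ZΛ, then Hx₀ is closed in G/Λ. -/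
open MeasureTheory Topology Set Filter Function
open scoped Manifold Pointwise

noncomputable section

section QBLAux
variable {G : Type*} [TopologicalSpace G] [Group G] [IsTopologicalGroup G]

lemma qbl_t2 (Λ : Subgroup G) (hΛ : IsClosed (Λ : Set G)) : T2Space (G ⧸ Λ) := by
  rw [t2_iff_isClosed_diagonal]
  have h := (QuotientGroup.isOpenQuotientMap_mk (N := Λ)).prodMap
      (QuotientGroup.isOpenQuotientMap_mk (N := Λ))
  rw [← h.isQuotientMap.isClosed_preimage]
  have heq : Prod.map (QuotientGroup.mk : G → G ⧸ Λ) QuotientGroup.mk ⁻¹' Set.diagonal (G ⧸ Λ)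
      = {p : G × G | p.1⁻¹ * p.2 ∈ Λ} := by
    ext p
    simp only [Set.mem_preimage, Set.mem_diagonal_iff, Prod.map_apply, Set.mem_setOf_eq]
    exact QuotientGroup.eq
  rw [heq]
  exact hΛ.preimage (continuous_fst.inv.mul continuous_snd)

def qblRT (Λ : Subgroup G) (z : G) (hz : ∀ l ∈ Λ, z⁻¹ * l * z ∈ Λ) : G ⧸ Λ → G ⧸ Λ :=
  fun x => Quotient.liftOn' x (fun g => (QuotientGroup.mk (g * z) : G ⧸ Λ))
    fun a b hab => by
      have h0 : (a : G ⧸ Λ) = b := Quotient.sound' hab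
      have h : a⁻¹ * b ∈ Λ := QuotientGroup.eq.mp h0
      apply QuotientGroup.eq.mpr
      have h2 := hz _ h
      simpa [mul_inv_rev, mul_assoc] using h2

omit [TopologicalSpace G] [IsTopologicalGroup G] in
@[simp] lemma qblRT_mk (Λ : Subgroup G) (z : G) (hz : ∀ l ∈ Λ, z⁻¹ * l * z ∈ Λ) (g : G) :
    qblRT Λ z hz (QuotientGroup.mk g) = QuotientGroup.mk (g * z) := rfl

lemma qblRT_cont (Λ : Subgroup G) (z : G) (hz : ∀ l ∈ Λ, z⁻¹ * l * z ∈ Λ) :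
    Continuous (qblRT Λ z hz) := by
  rw [(QuotientGroup.isQuotientMap_mk Λ).continuous_iff]
  exact QuotientGroup.continuous_mk.comp (continuous_mul_right z)

lemma qbl_idem {X : Type*} [TopologicalSpace X] [T2Space X]
    (D : Set X) (hD : IsCompact D) (hne : D.Nonempty)
    (mul : X → X → X)
    (hmulD : ∀ a ∈ D, ∀ b ∈ D, mul a b ∈ D)
    (hassoc : ∀ a b c, a ∈ D → b ∈ D → c ∈ D → mul (mul a b) c = mul a (mul b c))
    (hcont : ∀ b ∈ D, Continuous (fun a => mul a b)) :
    ∃ e ∈ D, mul e e = e := by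
  haveI : Nonempty ↥D := hne.to_subtype
  letI : Mul ↥D := ⟨fun a b => ⟨mul a b, hmulD _ a.2 _ b.2⟩⟩
  letI : Semigroup ↥D :=
    { mul_assoc := fun a b c => Subtype.ext (hassoc _ _ _ a.2 b.2 c.2) }
  haveI : CompactSpace ↥D := isCompact_iff_compactSpace.mp hD
  have hcl : ∀ r : ↥D, Continuous (fun x : ↥D => x * r) := by
    intro r
    apply Continuous.subtype_mk
    exact (hcont r r.2).comp continuous_subtype_val
  obtain ⟨e, he⟩ := exists_idempotent_of_compact_t2_of_continuous_mul_left hcl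
  exact ⟨e, e.2, congrArg Subtype.val he⟩

end QBLAux

theorem quotient_boundary_lemma
    {G : Type*} [TopologicalSpace G] [Group G] [IsTopologicalGroup G] [LocallyCompactSpace G]
    (Λ : Subgroup G) (hΛcl : IsClosed (Λ : Set G))
    (Z : Subgroup G) (hZcl : IsClosed (Z : Set G))
    (hZnorm : ∀ z ∈ Z, ∀ l ∈ Λ, z * l * z⁻¹ ∈ Λ)
    (hZcpt : IsCompact (orbitSet (Z : Set G) (QuotientGroup.mk (1 : G) : G ⧸ Λ)))
    (ρ : (G ⧸ Λ) → (G ⧸ (Z ⊔ Λ : Subgroup G)))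
    (hρ : ∀ g : G, ρ (QuotientGroup.mk g) = QuotientGroup.mk g)
    (H : Subgroup G) (hHcl : IsClosed (H : Set G))
    (hopen : ∃ O : Set (G ⧸ Λ), IsOpen O ∧
      orbitSet (H : Set G) (QuotientGroup.mk (1 : G) : G ⧸ Λ) =
        O ∩ closure (orbitSet (H : Set G) (QuotientGroup.mk (1 : G) : G ⧸ Λ))) :
    ρ '' (closure (orbitSet (H : Set G) (QuotientGroup.mk (1 : G) : G ⧸ Λ)) \
        orbitSet (H : Set G) (QuotientGroup.mk (1 : G) : G ⧸ Λ)) =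
      closure (orbitSet (H : Set G) (ρ (QuotientGroup.mk (1 : G)))) \
        orbitSet (H : Set G) (ρ (QuotientGroup.mk (1 : G))) ∧
    (IsClosed (orbitSet (H : Set G) (ρ (QuotientGroup.mk (1 : G)))) →
      IsClosed (orbitSet (H : Set G) (QuotientGroup.mk (1 : G) : G ⧸ Λ))) := by
  haveI hT2 : T2Space (G ⧸ Λ) := qbl_t2 Λ hΛcl
  set x₀ : G ⧸ Λ := QuotientGroup.mk (1 : G) with hx₀def
  set Y : Set (G ⧸ Λ) := orbitSet (H : Set G) x₀ with hYdef
  set X : Set (G ⧸ Λ) := closure Y with hXdef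
  set C : Set (G ⧸ Λ) := orbitSet (Z : Set G) x₀ with hCdef
  set W : Set (G ⧸ (Z ⊔ Λ : Subgroup G)) := orbitSet (H : Set G) (ρ x₀) with hWdef
  have hnz : ∀ z ∈ Z, ∀ l ∈ Λ, z⁻¹ * l * z ∈ Λ := fun z hz l hl => by
    simpa using hZnorm z⁻¹ (Z.inv_mem hz) l hl
  have hsmul_mk : ∀ (g a : G), g • (QuotientGroup.mk a : G ⧸ Λ) = QuotientGroup.mk (g * a) :=
    fun g a => rfl
  have hmk_one : ∀ g : G, g • x₀ = (QuotientGroup.mk g : G ⧸ Λ) := fun g => by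
    rw [hx₀def, hsmul_mk, mul_one]
  have hmkC : ∀ z ∈ Z, (QuotientGroup.mk z : G ⧸ Λ) ∈ C := fun z hz =>
    ⟨z, hz, hmk_one z⟩
  have hCclosed : IsClosed C := hZcpt.isClosed
  -- the subgroup Z ⊔ Λ as a set
  have hΔmem : ∀ g : G, g ∈ (Z ⊔ Λ : Subgroup G) ↔ ∃ z ∈ Z, ∃ l ∈ Λ, g = z * l := by
    let S : Subgroup G :=
      { carrier := {g | ∃ z ∈ Z, ∃ l ∈ Λ, g = z * l}
        one_mem' := ⟨1, Z.one_mem, 1, Λ.one_mem, by simp⟩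
        mul_mem' := by
          rintro a b ⟨z, hz, l, hl, rfl⟩ ⟨z', hz', l', hl', rfl⟩
          exact ⟨z * z', Z.mul_mem hz hz', (z'⁻¹ * l * z') * l',
            Λ.mul_mem (hnz z' hz' l hl) hl', by group⟩
        inv_mem' := by
          rintro a ⟨z, hz, l, hl, rfl⟩
          exact ⟨z⁻¹, Z.inv_mem hz, z * l⁻¹ * z⁻¹, hZnorm z hz l⁻¹ (Λ.inv_mem hl), by group⟩ }
    have hS2 : Z ⊔ Λ = S := by
      apply le_antisymm
      · exact sup_le (fun g hg => ⟨g, hg, 1, Λ.one_mem, by simp⟩)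
          (fun g hg => ⟨1, Z.one_mem, g, hg, by simp⟩)
      · rintro g ⟨z, hz, l, hl, rfl⟩
        exact Subgroup.mul_mem _ (Subgroup.mem_sup_left hz) (Subgroup.mem_sup_right hl)
    intro g
    rw [hS2]
    exact Iff.rfl
  -- Δ as preimage of C
  have hΔpre : ((Z ⊔ Λ : Subgroup G) : Set G) = (QuotientGroup.mk : G → G ⧸ Λ) ⁻¹' C := by
    ext g
    simp only [SetLike.mem_coe, Set.mem_preimage]
    constructor
    · intro hg
      obtain ⟨z, hz, l, hl, rfl⟩ := (hΔmem _).mp hg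
      have h1 : (QuotientGroup.mk (z * l) : G ⧸ Λ) = QuotientGroup.mk z := by
        apply QuotientGroup.eq.mpr
        simpa [mul_inv_rev, mul_assoc] using Λ.inv_mem hl
      rw [h1]
      exact hmkC z hz
    · rintro ⟨z, hz, hzeq⟩
      have hzeq' : z • x₀ = (QuotientGroup.mk g : G ⧸ Λ) := hzeq
      rw [hmk_one] at hzeq'
      have h2 : z⁻¹ * g ∈ Λ := QuotientGroup.eq.mp hzeq'
      exact (hΔmem g).mpr ⟨z, hz, z⁻¹ * g, h2, by group⟩
  have hΔcl : IsClosed ((Z ⊔ Λ : Subgroup G) : Set G) := by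
    rw [hΔpre]
    exact hCclosed.preimage QuotientGroup.continuous_mk
  -- ρ basics
  have hρcont : Continuous ρ := by
    rw [(QuotientGroup.isQuotientMap_mk Λ).continuous_iff]
    have : ρ ∘ (QuotientGroup.mk : G → G ⧸ Λ)
        = (QuotientGroup.mk : G → G ⧸ (Z ⊔ Λ : Subgroup G)) := funext hρ
    rw [this]
    exact QuotientGroup.continuous_mk
  have hρequi : ∀ (g : G) (x : G ⧸ Λ), ρ (g • x) = g • ρ x := by
    intro g x
    obtain ⟨a, rfl⟩ := QuotientGroup.mk_surjective x
    rw [hsmul_mk, hρ, hρ]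
    rfl
  -- invariance of Y and X under H
  have hYH : ∀ h ∈ H, ∀ y ∈ Y, h • y ∈ Y := by
    rintro h hh y ⟨g, hg, rfl⟩
    exact ⟨h * g, H.mul_mem hh hg, mul_smul h g x₀⟩
  have hXH : ∀ h ∈ H, ∀ x ∈ X, h • x ∈ X := by
    intro h hh x hx
    have hc : Continuous fun p : G ⧸ Λ => h • p := continuous_const_smul h
    have h1 : (fun p : G ⧸ Λ => h • p) '' Y ⊆ X := by
      rintro _ ⟨y, hy, rfl⟩
      exact subset_closure (hYH h hh y hy)
    exact closure_minimal h1 isClosed_closure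
      (image_closure_subset_closure_image hc ⟨x, hx, rfl⟩)
  have hx₀Y : x₀ ∈ Y := ⟨1, H.one_mem, one_smul _ _⟩
  -- right translations preserve X
  have hRX : ∀ z (hz : z ∈ Z), (QuotientGroup.mk z : G ⧸ Λ) ∈ X →
      ∀ x ∈ X, qblRT Λ z (hnz z hz) x ∈ X := by
    intro z hz hzX x hx
    have h1 : qblRT Λ z (hnz z hz) '' Y ⊆ X := by
      rintro _ ⟨_, ⟨g, hg, rfl⟩, rfl⟩
      show qblRT Λ z (hnz z hz) (g • x₀) ∈ X
      rw [hmk_one, qblRT_mk, ← hsmul_mk]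
      exact hXH g hg _ hzX
    exact closure_minimal h1 isClosed_closure
      (image_closure_subset_closure_image (qblRT_cont Λ z (hnz z hz)) ⟨x, hx, rfl⟩)
  -- THE CRUX: points of C ∩ X lie in Y
  have crux : ∀ z ∈ Z, (QuotientGroup.mk z : G ⧸ Λ) ∈ X → (QuotientGroup.mk z : G ⧸ Λ) ∈ Y := by
    intro z hz hzX
    have hpow : ∀ n : ℕ, (QuotientGroup.mk (z ^ n) : G ⧸ Λ) ∈ X := by
      intro n
      induction n with
      | zero => simpa using subset_closure hx₀Y
      | succ n ih =>
          have h := hRX z hz hzX _ ih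
          rw [qblRT_mk] at h
          rw [pow_succ]
          exact h
    set P : Set (G ⧸ Λ) := {x | ∃ n : ℕ, x = QuotientGroup.mk (z ^ (n + 1))} with hPdef
    set D : Set (G ⧸ Λ) := closure P with hDdef
    have hPC : P ⊆ C := by
      rintro _ ⟨n, rfl⟩
      exact hmkC _ (Z.pow_mem hz _)
    have hPX : P ⊆ X := by
      rintro _ ⟨n, rfl⟩
      exact hpow _
    have hDC : D ⊆ C := closure_minimal hPC hCclosed
    have hDX : D ⊆ X := closure_minimal hPX isClosed_closure
    have hDcpt : IsCompact D := hZcpt.of_isClosed_subset isClosed_closure hDC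
    have hDne : D.Nonempty := ⟨QuotientGroup.mk z, subset_closure ⟨0, by simp⟩⟩
    have hrepex : ∀ b ∈ C, ∃ w, w ∈ Z ∧ (QuotientGroup.mk w : G ⧸ Λ) = b := by
      rintro b ⟨w, hw, rfl⟩
      exact ⟨w, hw, (hmk_one w).symm⟩
    classical
    set zr : G ⧸ Λ → G := fun b =>
      if h : ∃ w, w ∈ Z ∧ (QuotientGroup.mk w : G ⧸ Λ) = b then h.choose else 1 with hzrdef
    have hzr1 : ∀ b, zr b ∈ Z := by
      intro b
      by_cases h : ∃ w, w ∈ Z ∧ (QuotientGroup.mk w : G ⧸ Λ) = b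
      · rw [hzrdef]; simp only [dif_pos h]; exact h.choose_spec.1
      · rw [hzrdef]; simp only [dif_neg h]; exact Z.one_mem
    have hzr2 : ∀ b ∈ C, (QuotientGroup.mk (zr b) : G ⧸ Λ) = b := by
      intro b hb
      have h := hrepex b hb
      rw [hzrdef]
      simp only [dif_pos h]
      exact h.choose_spec.2
    set mulf : G ⧸ Λ → G ⧸ Λ → G ⧸ Λ :=
      fun a b => qblRT Λ (zr b) (hnz _ (hzr1 b)) a with hmulfdef
    have hmulf_mk : ∀ (g : G) (b : G ⧸ Λ), mulf (QuotientGroup.mk g) b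
        = QuotientGroup.mk (g * zr b) := fun g b => rfl
    have hsmulD : ∀ n : ℕ, ∀ b ∈ D, z ^ (n + 1) • b ∈ D := by
      intro n b hb
      have hc : Continuous fun p : G ⧸ Λ => z ^ (n + 1) • p := continuous_const_smul _
      have h1 : (fun p : G ⧸ Λ => z ^ (n + 1) • p) '' P ⊆ D := by
        rintro _ ⟨_, ⟨m, rfl⟩, rfl⟩
        refine subset_closure ⟨n + 1 + m, ?_⟩
        show z ^ (n + 1) • (QuotientGroup.mk (z ^ (m + 1)) : G ⧸ Λ)
          = QuotientGroup.mk (z ^ (n + 1 + m + 1))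
        have harith : n + 1 + (m + 1) = n + 1 + m + 1 := by omega
        rw [hsmul_mk, ← pow_add, harith]
      exact closure_minimal h1 isClosed_closure
        (image_closure_subset_closure_image hc ⟨b, hb, rfl⟩)
    have hmulD : ∀ a ∈ D, ∀ b ∈ D, mulf a b ∈ D := by
      intro a ha b hb
      have hbC : b ∈ C := hDC hb
      have h1 : qblRT Λ (zr b) (hnz _ (hzr1 b)) '' P ⊆ D := by
        rintro _ ⟨_, ⟨m, rfl⟩, rfl⟩
        rw [qblRT_mk, ← hsmul_mk, hzr2 b hbC]
        exact hsmulD m b hb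
      exact closure_minimal h1 isClosed_closure
        (image_closure_subset_closure_image (qblRT_cont Λ _ _) ⟨a, ha, rfl⟩)
    have hassoc : ∀ a b c, a ∈ D → b ∈ D → c ∈ D → mulf (mulf a b) c = mulf a (mulf b c) := by
      intro a b c ha hb hc
      obtain ⟨g, rfl⟩ := QuotientGroup.mk_surjective a
      have hbC := hDC hb
      have hbc : mulf b c = QuotientGroup.mk (zr b * zr c) := by
        conv_lhs => rw [← hzr2 b hbC]
        rw [hmulf_mk]
      have hbcD : mulf b c ∈ D := hmulD b hb c hc
      have h3 : (QuotientGroup.mk (zr (mulf b c)) : G ⧸ Λ) = QuotientGroup.mk (zr b * zr c) := by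
        rw [hzr2 _ (hDC hbcD), hbc]
      have h4 : (zr b * zr c)⁻¹ * zr (mulf b c) ∈ Λ := QuotientGroup.eq.mp h3.symm
      rw [hmulf_mk, hmulf_mk, hmulf_mk]
      apply QuotientGroup.eq.mpr
      have h5 : (g * zr b * zr c)⁻¹ * (g * zr (mulf b c))
          = (zr b * zr c)⁻¹ * zr (mulf b c) := by group
      rw [h5]
      exact h4
    have hcont : ∀ b ∈ D, Continuous fun a => mulf a b := fun b _ => qblRT_cont Λ _ _
    obtain ⟨e, heD, hee⟩ := qbl_idem D hDcpt hDne mulf hmulD hassoc hcont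
    have heC : e ∈ C := hDC heD
    have hex₀ : e = x₀ := by
      have h6 : mulf e e = QuotientGroup.mk (zr e * zr e) := by
        have h6a : mulf e e = mulf (QuotientGroup.mk (zr e)) e := by rw [hzr2 e heC]
        rw [h6a, hmulf_mk]
      have h7 : (QuotientGroup.mk (zr e * zr e) : G ⧸ Λ) = QuotientGroup.mk (zr e) := by
        rw [← h6, hee, hzr2 e heC]
      have h8 : (zr e * zr e)⁻¹ * zr e ∈ Λ := QuotientGroup.eq.mp h7
      have h9 : zr e ∈ Λ := by
        have h9a : (zr e * zr e)⁻¹ * zr e = (zr e)⁻¹ := by group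
        rw [h9a] at h8
        simpa using Λ.inv_mem h8
      rw [← hzr2 e heC, hx₀def]
      apply QuotientGroup.eq.mpr
      simpa using Λ.inv_mem h9
    have hx₀D : x₀ ∈ D := hex₀ ▸ heD
    have hzinv : (QuotientGroup.mk z⁻¹ : G ⧸ Λ) ∈ X := by
      have h1 : qblRT Λ z⁻¹ (hnz _ (Z.inv_mem hz)) '' P ⊆ X := by
        rintro _ ⟨_, ⟨m, rfl⟩, rfl⟩
        rw [qblRT_mk]
        have hzz : z ^ (m + 1) * z⁻¹ = z ^ m := by
          rw [pow_succ, mul_inv_cancel_right]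
        rw [hzz]
        exact hpow m
      have h2 : qblRT Λ z⁻¹ (hnz _ (Z.inv_mem hz)) x₀
          ∈ qblRT Λ z⁻¹ (hnz _ (Z.inv_mem hz)) '' closure P := ⟨x₀, hx₀D, rfl⟩
      have h3 := closure_minimal h1 isClosed_closure
        (image_closure_subset_closure_image (qblRT_cont Λ _ _) h2)
      rw [hx₀def, qblRT_mk, one_mul] at h3
      exact h3
    have hx₀cl : x₀ ∈ closure (qblRT Λ z (hnz z hz) '' Y) := by
      have h2 : qblRT Λ z (hnz z hz) (QuotientGroup.mk z⁻¹)
          ∈ qblRT Λ z (hnz z hz) '' X := ⟨_, hzinv, rfl⟩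
      have h3 := image_closure_subset_closure_image (qblRT_cont Λ z (hnz z hz)) h2
      rw [qblRT_mk, inv_mul_cancel] at h3
      exact h3
    obtain ⟨O, hOopen, hYO⟩ := hopen
    have hx₀O : x₀ ∈ O := (hYO ▸ hx₀Y).1
    obtain ⟨w, hwO, hwR⟩ := (mem_closure_iff.mp hx₀cl) O hOopen hx₀O
    obtain ⟨y, hyY, rfl⟩ := hwR
    obtain ⟨g, hgH, rfl⟩ := hyY
    have hwX : qblRT Λ z (hnz z hz) (g • x₀) ∈ X := by
      rw [hmk_one, qblRT_mk, ← hsmul_mk]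
      exact hXH g hgH _ hzX
    have hwY : qblRT Λ z (hnz z hz) (g • x₀) ∈ Y := by
      rw [hYO]
      exact ⟨hwO, hwX⟩
    obtain ⟨g', hg'H, hg'⟩ := hwY
    have h10 : g' • x₀ = (QuotientGroup.mk (g * z) : G ⧸ Λ) := by
      have h10a : g' • x₀ = qblRT Λ z (hnz z hz) (g • x₀) := hg'
      rw [h10a, hmk_one, qblRT_mk]
    have h11 : (g⁻¹ * g') • x₀ = (QuotientGroup.mk z : G ⧸ Λ) := by
      rw [mul_smul, h10, hsmul_mk]
      congr 1
      group
    exact ⟨g⁻¹ * g', H.mul_mem (H.inv_mem hgH) hg'H, h11⟩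
  -- compact lifting of C
  have hlift : ∃ K : Set G, IsCompact K ∧ C ⊆ (QuotientGroup.mk : G → G ⧸ Λ) '' K := by
    have step : ∀ x : G ⧸ Λ, ∃ K : Set G, IsCompact K ∧
        (QuotientGroup.mk : G → G ⧸ Λ) '' interior K ∈ 𝓝 x := by
      intro x
      obtain ⟨g, rfl⟩ := QuotientGroup.mk_surjective x
      obtain ⟨K, hKc, hKn⟩ := exists_compact_mem_nhds g
      refine ⟨K, hKc, ?_⟩
      have ho : IsOpen ((QuotientGroup.mk : G → G ⧸ Λ) '' interior K) :=
        QuotientGroup.isOpenMap_coe _ isOpen_interior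
      exact ho.mem_nhds ⟨g, mem_interior_iff_mem_nhds.mpr hKn, rfl⟩
    choose Kf hKfc hKfn using step
    obtain ⟨t, -, htsub⟩ := hZcpt.elim_nhds_subcover
      (fun x => (QuotientGroup.mk : G → G ⧸ Λ) '' interior (Kf x)) (fun x _ => hKfn x)
    refine ⟨⋃ x ∈ t, Kf x, t.finite_toSet.isCompact_biUnion (fun x _ => hKfc x), ?_⟩
    intro c hc
    have hc2 := htsub hc
    simp only [Set.mem_iUnion] at hc2
    obtain ⟨x, hxt, g, hg, rfl⟩ := hc2
    exact ⟨g, Set.mem_biUnion hxt (interior_subset hg), rfl⟩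
  obtain ⟨K, hKcpt, hKsub⟩ := hlift
  set K₀ : Set G := K ∩ ((Z ⊔ Λ : Subgroup G) : Set G) with hK₀def
  have hK₀cpt : IsCompact K₀ := hKcpt.inter_right hΔcl
  have hK₀Δ : K₀ ⊆ ((Z ⊔ Λ : Subgroup G) : Set G) := Set.inter_subset_right
  have hΔdec : ∀ d ∈ (Z ⊔ Λ : Subgroup G), ∃ k ∈ K₀, ∃ l ∈ Λ, d = k * l := by
    intro d hd
    have hd' : d ∈ ((Z ⊔ Λ : Subgroup G) : Set G) := hd
    rw [hΔpre] at hd'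
    obtain ⟨k, hkK, hkeq⟩ := hKsub hd'
    have hkl : k⁻¹ * d ∈ Λ := by
      have h2 : d⁻¹ * k ∈ Λ := QuotientGroup.eq.mp hkeq.symm
      simpa [mul_inv_rev] using Λ.inv_mem h2
    have hkΔ : k ∈ ((Z ⊔ Λ : Subgroup G) : Set G) := by
      have : k = d * (d⁻¹ * k) := by group
      rw [this]
      exact Subgroup.mul_mem _ hd (Subgroup.mem_sup_right (QuotientGroup.eq.mp hkeq.symm))
    exact ⟨k, ⟨hkK, hkΔ⟩, k⁻¹ * d, hkl, by group⟩
  -- ρ '' X is closed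
  have hρXcl : IsClosed (ρ '' X) := by
    rw [← (QuotientGroup.isQuotientMap_mk (Z ⊔ Λ : Subgroup G)).isClosed_preimage]
    have heq2 : (QuotientGroup.mk : G → G ⧸ (Z ⊔ Λ : Subgroup G)) ⁻¹' (ρ '' X)
        = ((QuotientGroup.mk : G → G ⧸ Λ) ⁻¹' X) * K₀⁻¹ := by
      ext x
      simp only [Set.mem_preimage]
      constructor
      · rintro ⟨p, hpX, hpx⟩
        obtain ⟨g, rfl⟩ := QuotientGroup.mk_surjective p
        rw [hρ] at hpx
        have hgx : g⁻¹ * x ∈ (Z ⊔ Λ : Subgroup G) := QuotientGroup.eq.mp hpx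
        have hxg : x⁻¹ * g ∈ (Z ⊔ Λ : Subgroup G) := by
          have h3 := Subgroup.inv_mem _ hgx
          simpa [mul_inv_rev] using h3
        obtain ⟨k, hkK₀, l, hlΛ, hdec⟩ := hΔdec _ hxg
        have hxeq : x = g * l⁻¹ * k⁻¹ := by
          have h1 : g⁻¹ * x = l⁻¹ * k⁻¹ := by
            rw [← mul_inv_rev, ← hdec]
            group
          calc x = g * (g⁻¹ * x) := by group
          _ = g * (l⁻¹ * k⁻¹) := by rw [h1]
          _ = g * l⁻¹ * k⁻¹ := by group
        rw [hxeq]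
        refine Set.mul_mem_mul ?_ (Set.inv_mem_inv.mpr hkK₀)
        show (QuotientGroup.mk (g * l⁻¹) : G ⧸ Λ) ∈ X
        have h4 : (QuotientGroup.mk (g * l⁻¹) : G ⧸ Λ) = QuotientGroup.mk g := by
          apply QuotientGroup.eq.mpr
          simpa [mul_inv_rev, mul_assoc] using hlΛ
        rw [h4]
        exact hpX
      · rintro ⟨a, ha, b, hb, rfl⟩
        have hbΔ : b⁻¹ ∈ (Z ⊔ Λ : Subgroup G) := hK₀Δ (Set.mem_inv.mp hb)
        refine ⟨QuotientGroup.mk a, ha, ?_⟩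
        rw [hρ]
        symm
        apply QuotientGroup.eq.mpr
        simpa using Subgroup.inv_mem _ hbΔ
    rw [heq2]
    exact (hXdef ▸ isClosed_closure.preimage QuotientGroup.continuous_mk).mul_right_of_isCompact
      hK₀cpt.inv
  -- images of orbits
  have hρY : ρ '' Y = W := by
    ext w
    constructor
    · rintro ⟨_, ⟨g, hg, rfl⟩, rfl⟩
      exact ⟨g, hg, (hρequi g x₀).symm⟩
    · rintro ⟨g, hg, rfl⟩
      exact ⟨g • x₀, ⟨g, hg, rfl⟩, hρequi g x₀⟩
  have hWsub : W ⊆ ρ '' X := by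
    rw [← hρY]
    exact Set.image_mono subset_closure
  have hρXW : ρ '' X = closure W := by
    apply Set.Subset.antisymm
    · have h5 := image_closure_subset_closure_image (s := Y) hρcont
      rw [hρY] at h5
      exact h5
    · exact closure_minimal hWsub hρXcl
  -- boundary points do not map into W
  have hkey : ∀ p ∈ X, ρ p ∈ W → p ∈ Y := by
    intro p hpX hpW
    obtain ⟨h, hhH, hhp⟩ := hpW
    obtain ⟨g, rfl⟩ := QuotientGroup.mk_surjective p
    have hhp' : h • ρ x₀ = ρ (QuotientGroup.mk g) := hhp
    rw [hx₀def, hρ, hρ] at hhp'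
    have hsmulΔ : ∀ (u a : G), u • (QuotientGroup.mk a : G ⧸ (Z ⊔ Λ : Subgroup G))
        = QuotientGroup.mk (u * a) := fun u a => rfl
    rw [hsmulΔ, mul_one] at hhp'
    have hhg : h⁻¹ * g ∈ (Z ⊔ Λ : Subgroup G) := QuotientGroup.eq.mp hhp'
    obtain ⟨z, hz, l, hl, hzl⟩ := (hΔmem _).mp hhg
    have hq : (QuotientGroup.mk z : G ⧸ Λ) = h⁻¹ • QuotientGroup.mk g := by
      rw [hsmul_mk]
      apply QuotientGroup.eq.mpr
      rw [hzl]
      simpa using hl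
    have hzX : (QuotientGroup.mk z : G ⧸ Λ) ∈ X := by
      rw [hq]
      exact hXH h⁻¹ (H.inv_mem hhH) _ hpX
    have hzY := crux z hz hzX
    have hp_eq : (QuotientGroup.mk g : G ⧸ Λ) = h • QuotientGroup.mk z := by
      rw [hsmul_mk]
      apply QuotientGroup.eq.mpr
      have hg_eq : g⁻¹ * (h * z) = l⁻¹ := by
        have hg2 : g = h * (z * l) := by
          have : h * (h⁻¹ * g) = h * (z * l) := by rw [hzl]
          simpa [← mul_assoc] using this
        rw [hg2]
        group
      rw [hg_eq]
      exact Λ.inv_mem hl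
    rw [hp_eq]
    exact hYH h hhH _ hzY
  -- main equality
  have hmain : ρ '' (X \ Y) = closure W \ W := by
    apply Set.Subset.antisymm
    · rintro _ ⟨p, ⟨hpX, hpY⟩, rfl⟩
      refine ⟨?_, fun hpW => hpY (hkey p hpX hpW)⟩
      rw [← hρXW]
      exact Set.mem_image_of_mem ρ hpX
    · rintro w ⟨hw1, hw2⟩
      rw [← hρXW] at hw1
      obtain ⟨p, hpX, rfl⟩ := hw1
      refine ⟨p, ⟨hpX, fun hpY => hw2 ?_⟩, rfl⟩
      rw [← hρY]
      exact Set.mem_image_of_mem ρ hpY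
  refine ⟨hmain, fun hWcl => ?_⟩
  have hempty : X \ Y = ∅ := by
    rw [← Set.image_eq_empty (f := ρ), hmain, hWcl.closure_eq]
    exact Set.diff_self
  have hXY : X ⊆ Y := Set.diff_eq_empty.mp hempty
  exact isClosed_of_closure_subset hXY
end
end
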